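/- For integers n ≥ 3 and m ≥ 3, let S_n and S_m be star graphs (the complete bipartite graphs K_{1,n} and K_{1,m}). Then AT(S_n +_R S_m) = 3. -/

import Mathlib

open scoped Classical

/-- The outdegree of a vertex `v` in a finite set of arcs `A`. -/
noncomputable def arcOutDeg {V : Type*} (A : Finset (V × V)) (v : V) : ℕ :=
  (A.filter fun a => a.1 = v).card

/-- The indegree of a vertex `v` in a finite set of arcs `A`. -/
noncomputable def arcInDeg {V : Type*} (A : Finset (V × V)) (v : V) : ℕ :=
  (A.filter fun a => a.2 = v).card

/-- `A` is an orientation of the simple graph `G`: every arc of `A` joins adjacent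
vertices, and every edge of `G` receives exactly one of its two possible directions. -/
def IsOrientation {V : Type*} (G : SimpleGraph V) (A : Finset (V × V)) : Prop :=
  (∀ a ∈ A, G.Adj a.1 a.2) ∧ ∀ u v : V, G.Adj u v → ((u, v) ∈ A ↔ (v, u) ∉ A)

/-- A set of arcs is Eulerian if at every vertex the indegree equals the outdegree. -/
def IsEulerianSub {V : Type*} (B : Finset (V × V)) : Prop :=
  ∀ v : V, arcInDeg B v = arcOutDeg B v

/-- An orientation (given by its arc set `A`) is an Alon–Tarsi orientation if the number
of its even Eulerian sub-digraphs differs from the number of its odd Eulerian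
sub-digraphs. -/
def IsATOrientation {V : Type*} (A : Finset (V × V)) : Prop :=
  (A.powerset.filter fun B => IsEulerianSub B ∧ Even B.card).card ≠
    (A.powerset.filter fun B => IsEulerianSub B ∧ ¬ Even B.card).card

/-- The Alon–Tarsi number of `G`: the least `k` such that `G` has an Alon–Tarsi
orientation with maximum outdegree at most `k - 1` (i.e. `< k`). -/
noncomputable def alonTarsiNumber {V : Type*} (G : SimpleGraph V) : ℕ :=
  sInf {k : ℕ | ∃ A : Finset (V × V),
    IsOrientation G A ∧ IsATOrientation A ∧ ∀ v : V, arcOutDeg A v < k}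

/-- A graph is `k`-degenerate if every nonempty (induced) subgraph has a vertex of
degree at most `k`. -/
def Degenerate {V : Type*} (k : ℕ) (G : SimpleGraph V) : Prop :=
  ∀ s : Finset V, s.Nonempty → ∃ v ∈ s, (s.filter fun u => G.Adj v u).card ≤ k

/-- The subdivision graph `S(G)`: each edge `uv` of `G` is replaced by a path `u-e-v`
through the new vertex `e` corresponding to `uv`. -/
def subdivisionGraph {V : Type*} (G : SimpleGraph V) : SimpleGraph (V ⊕ ↥G.edgeSet) :=
  SimpleGraph.fromRel fun a b =>
    match a, b with
    | Sum.inl u, Sum.inr e => u ∈ (e : Sym2 V)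
    | _, _ => False

/-- The graph `R(G)`: `G` together with, for each edge `uv`, a new vertex joined to
`u` and `v`. -/
def rGraph {V : Type*} (G : SimpleGraph V) : SimpleGraph (V ⊕ ↥G.edgeSet) :=
  SimpleGraph.fromRel fun a b =>
    match a, b with
    | Sum.inl u, Sum.inl v => G.Adj u v
    | Sum.inl u, Sum.inr e => u ∈ (e : Sym2 V)
    | _, _ => False

/-- The graph `Q(G)`: new vertices joined to the endpoints of their edges, and two new
vertices joined iff the corresponding edges of `G` share an endpoint; original
vertices are pairwise nonadjacent. -/
def qGraph {V : Type*} (G : SimpleGraph V) : SimpleGraph (V ⊕ ↥G.edgeSet) :=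
  SimpleGraph.fromRel fun a b =>
    match a, b with
    | Sum.inl u, Sum.inr e => u ∈ (e : Sym2 V)
    | Sum.inr e, Sum.inr f => e ≠ f ∧ ∃ u : V, u ∈ (e : Sym2 V) ∧ u ∈ (f : Sym2 V)
    | _, _ => False

/-- The total graph `T(G)`. -/
def tGraph {V : Type*} (G : SimpleGraph V) : SimpleGraph (V ⊕ ↥G.edgeSet) :=
  SimpleGraph.fromRel fun a b =>
    match a, b with
    | Sum.inl u, Sum.inl v => G.Adj u v
    | Sum.inl u, Sum.inr e => u ∈ (e : Sym2 V)
    | Sum.inr e, Sum.inr f => e ≠ f ∧ ∃ u : V, u ∈ (e : Sym2 V) ∧ u ∈ (f : Sym2 V)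
    | _, _ => False

/-- The `F`-sum construction: given a graph `K` on `V ⊕ E` (playing the role of `F(G)`,
whose "original" vertices are those of the form `Sum.inl u`) and a graph `H` on `W`,
two vertices `(u₁, u₂)` and `(v₁, v₂)` are adjacent iff either `u₁ = v₁` is an original
vertex and `u₂v₂ ∈ E(H)`, or `u₂ = v₂` and `u₁v₁ ∈ E(K)`. -/
def fSum {V E W : Type*} (K : SimpleGraph (V ⊕ E)) (H : SimpleGraph W) :
    SimpleGraph ((V ⊕ E) × W) :=
  SimpleGraph.fromRel fun a b =>
    (a.1 = b.1 ∧ (∃ u : V, a.1 = Sum.inl u) ∧ H.Adj a.2 b.2) ∨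
      (a.2 = b.2 ∧ K.Adj a.1 b.1)

/-- The `S`-sum `G +_S H`. -/
def sSum {V W : Type*} (G : SimpleGraph V) (H : SimpleGraph W) :
    SimpleGraph ((V ⊕ ↥G.edgeSet) × W) :=
  fSum (subdivisionGraph G) H

/-- The `R`-sum `G +_R H`. -/
def rSum {V W : Type*} (G : SimpleGraph V) (H : SimpleGraph W) :
    SimpleGraph ((V ⊕ ↥G.edgeSet) × W) :=
  fSum (rGraph G) H

/-- The `Q`-sum `G +_Q H`. -/
def qSum {V W : Type*} (G : SimpleGraph V) (H : SimpleGraph W) :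
    SimpleGraph ((V ⊕ ↥G.edgeSet) × W) :=
  fSum (qGraph G) H

/-- The `T`-sum `G +_T H`. -/
def tSum {V W : Type*} (G : SimpleGraph V) (H : SimpleGraph W) :
    SimpleGraph ((V ⊕ ↥G.edgeSet) × W) :=
  fSum (tGraph G) H

/-- The star graph `S_n = K_{1,n}`. -/
def starGraph (n : ℕ) : SimpleGraph (Fin 1 ⊕ Fin n) :=
  completeBipartiteGraph (Fin 1) (Fin n)


set_option maxHeartbeats 1000000

noncomputable def rk {n m : ℕ} : ((Fin 1 ⊕ Fin n) ⊕ ↥(starGraph n).edgeSet) × (Fin 1 ⊕ Fin m) → ℕ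
  | (Sum.inl (Sum.inl _), Sum.inl _) => 0
  | (Sum.inl (Sum.inr _), Sum.inl _) => 1
  | (Sum.inl (Sum.inl _), Sum.inr _) => 2
  | (Sum.inl (Sum.inr _), Sum.inr _) => 3
  | (Sum.inr _, _) => 4

theorem rk_ne {n m : ℕ} (a b : ((Fin 1 ⊕ Fin n) ⊕ ↥(starGraph n).edgeSet) × (Fin 1 ⊕ Fin m))
    (h : (rSum (starGraph n) (starGraph m)).Adj a b) : rk a ≠ rk b := by
  obtain ⟨(x|x)|⟨e,he⟩, w|w⟩ := a <;> obtain ⟨(y|y)|⟨f,hf⟩, u|u⟩ := b <;>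
    simp only [rk] <;>
    first
    | omega
    | (exfalso
       simp [rSum, fSum, rGraph, starGraph, SimpleGraph.fromRel, Fin.fin_one_eq_zero] at h)

noncomputable def oriA (n m : ℕ) :
    Finset ((((Fin 1 ⊕ Fin n) ⊕ ↥(starGraph n).edgeSet) × (Fin 1 ⊕ Fin m)) ×
      (((Fin 1 ⊕ Fin n) ⊕ ↥(starGraph n).edgeSet) × (Fin 1 ⊕ Fin m))) :=
  Finset.univ.filter (fun a =>
    (rSum (starGraph n) (starGraph m)).Adj a.1 a.2 ∧ rk a.2 < rk a.1)

theorem mem_oriA {n m : ℕ} (a) : a ∈ oriA n m ↔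
    (rSum (starGraph n) (starGraph m)).Adj a.1 a.2 ∧ rk a.2 < rk a.1 := by
  simp [oriA]

theorem oriA_orientation (n m : ℕ) :
    IsOrientation (rSum (starGraph n) (starGraph m)) (oriA n m) := by
  constructor
  · exact fun a ha => ((mem_oriA a).mp ha).1
  · intro u v huv
    have hne := rk_ne u v huv
    rw [mem_oriA, mem_oriA]
    simp only [huv, huv.symm, true_and]
    omega

theorem outdeg_le_of {V : Type*} (A : Finset (V × V)) (v : V) (s : Finset V)
    (h : ∀ b ∈ A, b.1 = v → b.2 ∈ s) : arcOutDeg A v ≤ s.card := by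
  unfold arcOutDeg
  apply Finset.card_le_card_of_injOn (fun b => b.2)
  · intro b hb
    have hb' := Finset.mem_filter.mp hb
    exact h b hb'.1 hb'.2
  · intro b1 h1 b2 h2 he
    have h1' := Finset.mem_filter.mp h1
    have h2' := Finset.mem_filter.mp h2
    exact Prod.ext (h1'.2.trans h2'.2.symm) he

theorem oriA_outdeg (n m : ℕ) (v) : arcOutDeg (oriA n m) v ≤ 2 := by
  obtain ⟨(x|x)|⟨e,he⟩, w|w⟩ := v
  · refine le_trans (outdeg_le_of _ _ ∅ ?_) (by simp)
    rintro ⟨b1, b2⟩ hb rfl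
    have hlt := ((mem_oriA _).mp hb).2
    simp [rk] at hlt
  · refine le_trans (outdeg_le_of _ _ {(Sum.inl (Sum.inl x), Sum.inl 0)} ?_) (by simp)
    rintro ⟨b1, b2⟩ hb rfl
    obtain ⟨hadj, hlt⟩ := (mem_oriA _).mp hb
    obtain ⟨(y|y)|⟨f,hf⟩, u|u⟩ := b2 <;> dsimp only at hadj hlt <;>
        simp only [rk] at hlt <;>
      first
      | (exfalso; omega)
      | (simp [rSum, fSum, rGraph, starGraph, SimpleGraph.fromRel, Sym2.mem_iff,
          Fin.fin_one_eq_zero] at hadj ⊢ <;> aesop <;> first | exact Finset.mem_singleton_self _ | exact Finset.mem_insert_self _ _ | exact Finset.mem_insert_of_mem (Finset.mem_singleton_self _))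
  · refine le_trans (outdeg_le_of _ _ {(Sum.inl (Sum.inl 0), Sum.inl 0)} ?_) (by simp)
    rintro ⟨b1, b2⟩ hb rfl
    obtain ⟨hadj, hlt⟩ := (mem_oriA _).mp hb
    obtain ⟨(y|y)|⟨f,hf⟩, u|u⟩ := b2 <;> dsimp only at hadj hlt <;>
        simp only [rk] at hlt <;>
      first
      | (exfalso; omega)
      | (simp [rSum, fSum, rGraph, starGraph, SimpleGraph.fromRel, Sym2.mem_iff,
          Fin.fin_one_eq_zero] at hadj ⊢ <;> aesop <;> first | exact Finset.mem_singleton_self _ | exact Finset.mem_insert_self _ _ | exact Finset.mem_insert_of_mem (Finset.mem_singleton_self _))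
  · refine le_trans (outdeg_le_of _ _
      {(Sum.inl (Sum.inr x), Sum.inl 0), (Sum.inl (Sum.inl 0), Sum.inr w)} ?_)
      (Finset.card_insert_le _ _ |>.trans (by simp))
    rintro ⟨b1, b2⟩ hb rfl
    obtain ⟨hadj, hlt⟩ := (mem_oriA _).mp hb
    obtain ⟨(y|y)|⟨f,hf⟩, u|u⟩ := b2 <;> dsimp only at hadj hlt <;>
        simp only [rk] at hlt <;>
      first
      | (exfalso; omega)
      | (simp [rSum, fSum, rGraph, starGraph, SimpleGraph.fromRel, Sym2.mem_iff,
          Fin.fin_one_eq_zero] at hadj ⊢ <;> aesop <;> first | exact Finset.mem_singleton_self _ | exact Finset.mem_insert_self _ _ | exact Finset.mem_insert_of_mem (Finset.mem_singleton_self _))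
  · revert he
    induction e using Sym2.ind with
    | _ p q =>
      intro he
      refine le_trans (outdeg_le_of _ _
        {(Sum.inl p, Sum.inl w), (Sum.inl q, Sum.inl w)} ?_)
        (Finset.card_insert_le _ _ |>.trans (by simp))
      rintro ⟨b1, b2⟩ hb rfl
      obtain ⟨hadj, hlt⟩ := (mem_oriA _).mp hb
      obtain ⟨(y|y)|⟨f,hf⟩, u|u⟩ := b2 <;> dsimp only at hadj hlt <;>
        (simp [rSum, fSum, rGraph, starGraph, SimpleGraph.fromRel, Sym2.mem_iff,
            Fin.fin_one_eq_zero] at hadj ⊢ <;> aesop <;> first | exact Finset.mem_singleton_self _ | exact Finset.mem_insert_self _ _ | exact Finset.mem_insert_of_mem (Finset.mem_singleton_self _))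
  · revert he
    induction e using Sym2.ind with
    | _ p q =>
      intro he
      refine le_trans (outdeg_le_of _ _
        {(Sum.inl p, Sum.inr w), (Sum.inl q, Sum.inr w)} ?_)
        (Finset.card_insert_le _ _ |>.trans (by simp))
      rintro ⟨b1, b2⟩ hb rfl
      obtain ⟨hadj, hlt⟩ := (mem_oriA _).mp hb
      obtain ⟨(y|y)|⟨f,hf⟩, u|u⟩ := b2 <;> dsimp only at hadj hlt <;>
        (simp [rSum, fSum, rGraph, starGraph, SimpleGraph.fromRel, Sym2.mem_iff,
            Fin.fin_one_eq_zero] at hadj ⊢ <;> aesop <;> first | exact Finset.mem_singleton_self _ | exact Finset.mem_insert_self _ _ | exact Finset.mem_insert_of_mem (Finset.mem_singleton_self _))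

theorem sum_fst_eq_sum_snd {V : Type*} [Fintype V] (B : Finset (V × V)) (r : V → ℕ)
    (hE : IsEulerianSub B) : ∑ b ∈ B, r b.1 = ∑ b ∈ B, r b.2 := by
  have h1 : ∑ b ∈ B, r b.1 = ∑ v : V, (arcOutDeg B v) * r v := by
    rw [← Finset.sum_fiberwise B (fun b => b.1) (fun b => r b.1)]
    refine Finset.sum_congr rfl fun v _ => ?_
    rw [Finset.sum_congr rfl (fun b hb => by rw [(Finset.mem_filter.mp hb).2]),
      Finset.sum_const, smul_eq_mul]
    rfl
  have h2 : ∑ b ∈ B, r b.2 = ∑ v : V, (arcInDeg B v) * r v := by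
    rw [← Finset.sum_fiberwise B (fun b => b.2) (fun b => r b.2)]
    refine Finset.sum_congr rfl fun v _ => ?_
    rw [Finset.sum_congr rfl (fun b hb => by rw [(Finset.mem_filter.mp hb).2]),
      Finset.sum_const, smul_eq_mul]
    rfl
  rw [h1, h2]
  exact Finset.sum_congr rfl fun v _ => by rw [hE v]

theorem eulerian_empty (n m : ℕ) (B) (hB : B ⊆ oriA n m) (hE : IsEulerianSub B) :
    B = ∅ := by
  by_contra hne
  have hne' : B.Nonempty := Finset.nonempty_of_ne_empty hne
  have hlt : ∑ b ∈ B, rk b.2 < ∑ b ∈ B, rk b.1 :=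
    Finset.sum_lt_sum_of_nonempty hne' fun b hb => ((mem_oriA b).mp (hB hb)).2
  rw [sum_fst_eq_sum_snd B rk hE] at hlt
  omega

theorem oriA_AT (n m : ℕ) : IsATOrientation (oriA n m) := by
  unfold IsATOrientation
  have h1 : ((oriA n m).powerset.filter fun B => IsEulerianSub B ∧ Even B.card) = {∅} := by
    ext B
    simp only [Finset.mem_filter, Finset.mem_powerset, Finset.mem_singleton]
    constructor
    · rintro ⟨hB, hE, _⟩
      exact eulerian_empty n m B hB hE
    · rintro rfl
      refine ⟨Finset.empty_subset _, fun v => ?_, by simp⟩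
      simp [arcInDeg, arcOutDeg]
  have h2 : ((oriA n m).powerset.filter fun B => IsEulerianSub B ∧ ¬ Even B.card) = ∅ := by
    ext B
    simp only [Finset.mem_filter, Finset.mem_powerset, Finset.notMem_empty, iff_false,
      not_and]
    intro hB hE
    rw [eulerian_empty n m B hB hE]
    simp
  rw [h1, h2]
  simp

theorem two_le_outdeg {V : Type*} (A : Finset (V × V)) (v a b : V) (hab : a ≠ b)
    (ha : (v, a) ∈ A) (hb : (v, b) ∈ A) : 2 ≤ arcOutDeg A v := by
  unfold arcOutDeg
  have hsub : {(v, a), (v, b)} ⊆ A.filter fun p => p.1 = v := by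
    intro x hx
    simp only [Finset.mem_insert, Finset.mem_singleton] at hx
    rcases hx with rfl | rfl <;> simp [Finset.mem_filter, ha, hb]
  calc 2 = ({(v, a), (v, b)} : Finset (V × V)).card := by
        rw [Finset.card_insert_of_notMem (by simp [hab]), Finset.card_singleton]
    _ ≤ _ := Finset.card_le_card hsub

theorem lower_bound (n m : ℕ) (hn : 3 ≤ n) (A)
    (hA : IsOrientation (rSum (starGraph n) (starGraph m)) A)
    (hout : ∀ v, arcOutDeg A v ≤ 1) : False := by
  have hdir : ∀ u v, (rSum (starGraph n) (starGraph m)).Adj u v →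
      ((u, v) ∈ A ∨ (v, u) ∈ A) := by
    intro u v h
    by_cases hc : (u, v) ∈ A
    · exact Or.inl hc
    · right
      by_contra hc2
      exact hc ((hA.2 u v h).mpr hc2)
  have hedge : ∀ i : Fin n, s(Sum.inl 0, Sum.inr i) ∈ (starGraph n).edgeSet := by
    intro i; simp [starGraph]
  let c0 : ((Fin 1 ⊕ Fin n) ⊕ ↥(starGraph n).edgeSet) × (Fin 1 ⊕ Fin m) :=
    (Sum.inl (Sum.inl 0), Sum.inl 0)
  let L : Fin n → ((Fin 1 ⊕ Fin n) ⊕ ↥(starGraph n).edgeSet) × (Fin 1 ⊕ Fin m) :=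
    fun i => (Sum.inl (Sum.inr i), Sum.inl 0)
  let E : Fin n → ((Fin 1 ⊕ Fin n) ⊕ ↥(starGraph n).edgeSet) × (Fin 1 ⊕ Fin m) :=
    fun i => (Sum.inr ⟨s(Sum.inl 0, Sum.inr i), hedge i⟩, Sum.inl 0)
  have adjCL : ∀ i, (rSum (starGraph n) (starGraph m)).Adj c0 (L i) := by
    intro i
    simp [c0, L, rSum, fSum, rGraph, starGraph, SimpleGraph.fromRel]
  have adjCE : ∀ i, (rSum (starGraph n) (starGraph m)).Adj c0 (E i) := by
    intro i
    simp [c0, E, rSum, fSum, rGraph, starGraph, SimpleGraph.fromRel, Sym2.mem_iff]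
  have adjLE : ∀ i, (rSum (starGraph n) (starGraph m)).Adj (L i) (E i) := by
    intro i
    simp [L, E, rSum, fSum, rGraph, starGraph, SimpleGraph.fromRel, Sym2.mem_iff]
  have key : ∀ i : Fin n, (c0, L i) ∈ A ∨ (c0, E i) ∈ A := by
    intro i
    by_contra hc
    push_neg at hc
    have h1 : (L i, c0) ∈ A := (hdir _ _ (adjCL i)).resolve_left hc.1
    have h2 : (E i, c0) ∈ A := (hdir _ _ (adjCE i)).resolve_left hc.2
    rcases hdir _ _ (adjLE i) with h3 | h3
    · have := two_le_outdeg A (L i) c0 (E i) (by simp [c0, E]) h1 h3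
      have := hout (L i); omega
    · have := two_le_outdeg A (E i) c0 (L i) (by simp [c0, L]) h2 h3
      have := hout (E i); omega
  have i0lt : (0 : ℕ) < n := by omega
  have i1lt : (1 : ℕ) < n := by omega
  have hLL : L ⟨0, i0lt⟩ ≠ L ⟨1, i1lt⟩ := by simp [L]
  have hLE : ∀ i j, L i ≠ E j := by intro i j; simp [L, E]
  have hEL : ∀ i j, E i ≠ L j := by intro i j; simp [L, E]
  have hEE : E ⟨0, i0lt⟩ ≠ E ⟨1, i1lt⟩ := by
    simp [E, Sym2.eq_iff]
  have hout0 := hout c0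
  rcases key ⟨0, i0lt⟩ with h0 | h0 <;> rcases key ⟨1, i1lt⟩ with h1 | h1
  · have := two_le_outdeg A c0 _ _ hLL h0 h1; omega
  · have := two_le_outdeg A c0 _ _ (hLE _ _) h0 h1; omega
  · have := two_le_outdeg A c0 _ _ (hEL _ _) h0 h1; omega
  · have := two_le_outdeg A c0 _ _ hEE h0 h1; omega

/-- `AT(S_n +_R S_m) = 3` for `n, m ≥ 3`. -/
theorem stmt12 (n m : ℕ) (hn : 3 ≤ n) (hm : 3 ≤ m) :
    alonTarsiNumber (rSum (starGraph n) (starGraph m)) = 3 := by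
  have h3 : 3 ∈ {k : ℕ | ∃ A, IsOrientation (rSum (starGraph n) (starGraph m)) A ∧
      IsATOrientation A ∧ ∀ v, arcOutDeg A v < k} :=
    ⟨oriA n m, oriA_orientation n m, oriA_AT n m,
      fun v => lt_of_le_of_lt (oriA_outdeg n m v) (by omega)⟩
  refine le_antisymm (csInf_le (OrderBot.bddBelow _) h3) (le_csInf ⟨3, h3⟩ ?_)
  intro k hk
  by_contra hlt
  push_neg at hlt
  obtain ⟨A, hA, _, hout⟩ := hk
  exact lower_bound n m hn A hA fun v => by have := hout v; omega
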